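/- A frontal-square tensor A ∈ ℝ^{n×n×p} has a T-inverse (i.e., there exists B with A*B = B*A = I_{nnp}) if and only if the matrix bcirc(A) is invertible, in which case bcirc(A⁻¹) = bcirc(A)⁻¹. -/

import Mathlib

open Matrix BigOperators

variable {p : ℕ}

/-- Block circulant matrix of a third-order tensor (tensor = family of frontal slices). -/
def bcirc {I J : Type*} (A : Fin p → Matrix I J ℝ) :
    Matrix (Fin p × I) (Fin p × J) ℝ :=
  Matrix.of fun ik jl => A (ik.1 - jl.1) ik.2 jl.2

/-- T-product of third-order tensors: `(A*B)^(k) = Σ_j A^(k-j) B^(j)` (indices mod p),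
which is exactly `fold(bcirc(A) · unfold(B))`. -/
def tProd {I J K : Type*} [Fintype J] (A : Fin p → Matrix I J ℝ)
    (B : Fin p → Matrix J K ℝ) : Fin p → Matrix I K ℝ :=
  fun k => ∑ j : Fin p, A (k - j) * B j

/-- Tensor transpose: transpose each frontal slice and reverse slices 2..p. -/
def ttrans {I J : Type*} (A : Fin p → Matrix I J ℝ) :
    Fin p → Matrix J I ℝ :=
  fun k => (A (-k))ᵀ

/-- Identity tensor: first frontal slice the identity matrix, other slices zero. -/
def tid (I : Type*) [DecidableEq I] [NeZero p] : Fin p → Matrix I I ℝ :=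
  fun k => if k = 0 then 1 else 0

/-- Entrywise (Frobenius) inner product of third-order tensors. -/
def tinner {I J : Type*} [Fintype I] [Fintype J]
    (X Y : Fin p → Matrix I J ℝ) : ℝ :=
  ∑ k, ∑ i, ∑ j, X k i j * Y k i j

/-- Symmetric T-positive semidefinite tensor. -/
def TPSD {I : Type*} [Fintype I] (A : Fin p → Matrix I I ℝ) : Prop :=
  ttrans A = A ∧ ∀ X : Fin p → Matrix I (Fin 1) ℝ, 0 ≤ tinner X (tProd A X)

/-- Symmetric T-positive definite tensor. -/
def TPD {I : Type*} [Fintype I] (A : Fin p → Matrix I I ℝ) : Prop :=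
  ttrans A = A ∧ ∀ X : Fin p → Matrix I (Fin 1) ℝ, X ≠ 0 → 0 < tinner X (tProd A X)

/-- k-fold T-product power of a tensor, with `tpow A 0` the identity tensor. -/
def tpow {I : Type*} [Fintype I] [DecidableEq I] [NeZero p]
    (A : Fin p → Matrix I I ℝ) : ℕ → Fin p → Matrix I I ℝ
  | 0 => tid I
  | k + 1 => tProd A (tpow A k)



lemma bcirc_tid {n p : ℕ} [NeZero p] : bcirc (tid (Fin n) : Fin p → _) = 1 := by
  ext ⟨k, i⟩ ⟨l, j⟩
  simp only [bcirc, tid, Matrix.of_apply, Matrix.one_apply, Prod.mk.injEq]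
  by_cases h : k = l
  · subst h; simp [Matrix.one_apply]
  · have : k - l ≠ 0 := sub_ne_zero.mpr h
    simp [this, h]

lemma bcirc_tProd {n p : ℕ} [NeZero p] (A B : Fin p → Matrix (Fin n) (Fin n) ℝ) :
    bcirc (tProd A B) = bcirc A * bcirc B := by
  ext ⟨k, i⟩ ⟨l, j⟩
  simp only [bcirc, tProd, Matrix.of_apply, Matrix.sum_apply, Matrix.mul_apply,
    Fintype.sum_prod_type]
  refine Fintype.sum_equiv (Equiv.addRight l) _ _ fun m => ?_
  refine Finset.sum_congr rfl fun s _ => ?_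
  have h1 : k - l - m = k - (m + l) := by abel
  have h2 : m + l - l = m := by abel
  simp [Equiv.addRight, h1, h2]

lemma bcirc_inj {n p : ℕ} [NeZero p] {A B : Fin p → Matrix (Fin n) (Fin n) ℝ}
    (h : bcirc A = bcirc B) : A = B := by
  funext k
  ext i j
  have := congrFun (congrFun h (k, i)) (0, j)
  simpa [bcirc] using this

lemma bcirc_shift {n p : ℕ} [NeZero p] (A : Fin p → Matrix (Fin n) (Fin n) ℝ) (l : Fin p) :
    (bcirc A).submatrix (Equiv.prodCongr (Equiv.addRight l) (Equiv.refl (Fin n)))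
      (Equiv.prodCongr (Equiv.addRight l) (Equiv.refl (Fin n))) = bcirc A := by
  ext ⟨k, i⟩ ⟨m, j⟩
  simp only [Matrix.submatrix_apply, Equiv.prodCongr_apply, Equiv.coe_addRight,
    Equiv.refl_apply, Prod.map, bcirc, Matrix.of_apply]
  have : k + l - (m + l) = k - m := by abel
  rw [this]

lemma bcirc_of_inv {n p : ℕ} [NeZero p] (A : Fin p → Matrix (Fin n) (Fin n) ℝ) :
    bcirc (fun k => Matrix.of fun i j => (bcirc A)⁻¹ (k, i) (0, j)) = (bcirc A)⁻¹ := by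
  ext ⟨k, i⟩ ⟨m, j⟩
  simp only [bcirc, Matrix.of_apply]
  have h2 : ((bcirc A).submatrix (Equiv.prodCongr (Equiv.addRight m) (Equiv.refl (Fin n)))
      (Equiv.prodCongr (Equiv.addRight m) (Equiv.refl (Fin n))))⁻¹ = (bcirc A)⁻¹ := by
    rw [bcirc_shift]
  rw [Matrix.inv_submatrix_equiv] at h2
  have := congrFun (congrFun h2 (k - m, i)) (0, j)
  exact (by simpa using this.symm : (bcirc A)⁻¹ (k - m, i) (0, j) = (bcirc A)⁻¹ (k, i) (m, j))

/-- A has a T-inverse iff bcirc(A) is invertible, and in that case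
bcirc(A⁻¹) = bcirc(A)⁻¹. -/
theorem tinv_iff_bcirc_isUnit {n p : ℕ} [NeZero p]
    (A : Fin p → Matrix (Fin n) (Fin n) ℝ) :
    ((∃ B : Fin p → Matrix (Fin n) (Fin n) ℝ,
        tProd A B = tid (Fin n) ∧ tProd B A = tid (Fin n)) ↔ IsUnit (bcirc A)) ∧
    (∀ B : Fin p → Matrix (Fin n) (Fin n) ℝ,
        tProd A B = tid (Fin n) → tProd B A = tid (Fin n) → bcirc B = (bcirc A)⁻¹) := by
  constructor
  · constructor
    · rintro ⟨B, hAB, hBA⟩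
      exact ⟨⟨bcirc A, bcirc B, by rw [← bcirc_tProd, hAB, bcirc_tid],
        by rw [← bcirc_tProd, hBA, bcirc_tid]⟩, rfl⟩
    · intro hU
      have hdet := (Matrix.isUnit_iff_isUnit_det _).mp hU
      have hMA : (bcirc A)⁻¹ * bcirc A = 1 := Matrix.nonsing_inv_mul _ hdet
      have hAM : bcirc A * (bcirc A)⁻¹ = 1 := Matrix.mul_nonsing_inv _ hdet
      refine ⟨fun k => Matrix.of fun i j => (bcirc A)⁻¹ (k, i) (0, j), ?_, ?_⟩
      · refine bcirc_inj ?_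
        rw [bcirc_tProd, bcirc_tid, bcirc_of_inv, hAM]
      · refine bcirc_inj ?_
        rw [bcirc_tProd, bcirc_tid, bcirc_of_inv, hMA]
  · intro B hAB _
    have : bcirc A * bcirc B = 1 := by rw [← bcirc_tProd, hAB, bcirc_tid]
    exact (Matrix.inv_eq_right_inv this).symm
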